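/- Let N be an even positive integer, let c₂ be a real number, and let c₁ be a real number such that c := 2N c₁ is an integer. Let k, l be integers. Then the DAFT-domain subchannel matrix H(k,l) = A Δ_N^k Π_N^l Aᴴ has entries, for m, m' ∈ {0,…,N−1}: H(k,l)[m, m'] = e^{(2πi/N)(N c₁ l² − m' l + N c₂ (m'² − m²))} if m' ≡ m + c l − k (mod N), and H(k,l)[m, m'] = 0 otherwise. In particular, each path with integer delay l and integer Doppler k occupies in the DAFT domain exactly the positions determined by the index indicator ind = (2N c₁ l − k) mod N. -/

import Mathlib

open Matrix Complex

/-- The `N × N` forward cyclic-shift matrix raised to the (integer) power `l`. -/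
noncomputable def cyclicShift (N : ℕ) (l : ℤ) : Matrix (Fin N) (Fin N) ℂ :=
  Matrix.of fun p q => if ((p : ℕ) : ZMod N) = ((q : ℕ) : ZMod N) + (l : ZMod N) then 1 else 0

/-- The digital frequency-shift matrix `Δ_N^k = diag(e^{2πi k n / N}, n = 0,…,N−1)`. -/
noncomputable def dopplerShift (N : ℕ) (k : ℤ) : Matrix (Fin N) (Fin N) ℂ :=
  Matrix.diagonal fun n : Fin N =>
    Complex.exp (2 * Real.pi * Complex.I * (k : ℂ) * ((n : ℕ) : ℂ) / (N : ℂ))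

/-- The `N × N` unitary DFT matrix with entries `F[m,n] = e^{−2πi m n / N} / √N`. -/
noncomputable def dftMatrix (N : ℕ) : Matrix (Fin N) (Fin N) ℂ :=
  Matrix.of fun m n : Fin N =>
    Complex.exp (-(2 * Real.pi * Complex.I * ((m : ℕ) : ℂ) * ((n : ℕ) : ℂ) / (N : ℂ))) /
      (Real.sqrt N : ℂ)

/-- For a real parameter `c`, the diagonal chirp matrix `Λ_c = diag(e^{−2πi c q²})`. -/
noncomputable def chirpMatrix (N : ℕ) (c : ℝ) : Matrix (Fin N) (Fin N) ℂ :=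
  Matrix.diagonal fun q : Fin N =>
    Complex.exp (-(2 * Real.pi * Complex.I * (c : ℂ) * ((q : ℕ) : ℂ) ^ 2))

/-- The DAFT matrix `A = Λ_{c₂} F Λ_{c₁}`. -/
noncomputable def daft (N : ℕ) (c₁ c₂ : ℝ) : Matrix (Fin N) (Fin N) ℂ :=
  chirpMatrix N c₂ * dftMatrix N * chirpMatrix N c₁

/-- The DAFT-domain subchannel matrix `H(k,l) = A Δ_N^k Π_N^l Aᴴ` of a path with integer
Doppler shift `k` and integer delay shift `l`. -/
noncomputable def subChannel (N : ℕ) (c₁ c₂ : ℝ) (k l : ℤ) : Matrix (Fin N) (Fin N) ℂ :=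
  daft N c₁ c₂ * dopplerShift N k * cyclicShift N l * (daft N c₁ c₂)ᴴ

/-! Auxiliary lemmas -/

noncomputable def ee (x : ℂ) : ℂ := Complex.exp (2 * Real.pi * Complex.I * x)

lemma ee_add (x y : ℂ) : ee (x + y) = ee x * ee y := by
  simp [ee, mul_add, Complex.exp_add]

lemma ee_int (n : ℤ) : ee n = 1 := by
  have := Complex.exp_int_mul_two_pi_mul_I n
  rw [ee, ← this]; ring_nf

lemma ee_eq (x y : ℂ) (n : ℤ) (h : x = y + n) : ee x = ee y := by
  rw [h, ee_add, ee_int, mul_one]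

lemma ee_pow (x : ℂ) (n : ℕ) : ee x ^ n = ee (n * x) := by
  rw [ee, ee, ← Complex.exp_nat_mul]; ring_nf

lemma sum_ee (N : ℕ) (hN : 0 < N) (d : ℤ) :
    ∑ q : Fin N, ee ((q : ℕ) * (d : ℂ) / N) = if (d : ZMod N) = 0 then (N : ℂ) else 0 := by
  have hN' : (N : ℂ) ≠ 0 := Nat.cast_ne_zero.2 hN.ne'
  set z : ℂ := ee (d / N) with hz
  have hterm : ∀ q : Fin N, ee ((q : ℕ) * (d : ℂ) / N) = z ^ (q : ℕ) := by
    intro q; rw [hz, ee_pow]; congr 1; ring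
  have hzN : z ^ N = 1 := by
    rw [hz, ee_pow]; field_simp; exact ee_int d
  simp only [hterm]
  rw [Fin.sum_univ_eq_sum_range (fun i => z ^ i) N]
  split_ifs with h
  · obtain ⟨j, hj⟩ := (ZMod.intCast_zmod_eq_zero_iff_dvd d N).1 h
    have : z = 1 := by
      have : (d : ℂ) / N = (j : ℂ) := by
        rw [hj]; push_cast; field_simp
      rw [hz, this]; exact ee_int j
    simp [this]
  · have hz1 : z ≠ 1 := by
      intro hz1
      rw [hz, ee, Complex.exp_eq_one_iff] at hz1
      obtain ⟨n, hn⟩ := hz1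
      have hπ : (2 * Real.pi * Complex.I : ℂ) ≠ 0 := by
        simp [Real.pi_ne_zero, Complex.I_ne_zero]
      have hd : (d : ℂ) = n * N := by
        field_simp at hn
        have h2 : (2 * Real.pi * Complex.I : ℂ) * (d : ℂ) =
            (2 * Real.pi * Complex.I) * ((n : ℂ) * N) := by linear_combination (2 * Real.pi * Complex.I : ℂ) * hn
        exact mul_left_cancel₀ hπ h2
      have hd' : d = n * N := by exact_mod_cast hd
      exact h ((ZMod.intCast_zmod_eq_zero_iff_dvd d N).2 ⟨n, by rw [hd']; ring⟩)
    rw [geom_sum_eq hz1, hzN]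
    simp

lemma sum_ind (N : ℕ) [NeZero N] (t : ZMod N) (f : Fin N → ℂ) :
    ∑ n : Fin N, (if ((n : ℕ) : ZMod N) = t then f n else 0) = f ⟨t.val, ZMod.val_lt t⟩ := by
  have key : ∀ n : Fin N, (((n : ℕ) : ZMod N) = t) ↔ n = ⟨t.val, ZMod.val_lt t⟩ := by
    intro n
    constructor
    · intro h
      apply Fin.ext
      have h2 : ((n : ℕ) : ZMod N).val = (n : ℕ) := ZMod.val_cast_of_lt n.isLt
      rw [h] at h2
      simp [← h2]
    · rintro rfl
      exact ZMod.natCast_rightInverse t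
  calc ∑ n : Fin N, (if ((n : ℕ) : ZMod N) = t then f n else 0)
      = ∑ n : Fin N, (if n = ⟨t.val, ZMod.val_lt t⟩ then f n else 0) := by
        refine Finset.sum_congr rfl fun n _ => ?_
        simp [key n]
    _ = f ⟨t.val, ZMod.val_lt t⟩ := by
        rw [Finset.sum_ite_eq' Finset.univ]; simp

lemma daft_apply' (N : ℕ) (hN : 0 < N) (c₁ c₂ : ℝ) (m n : Fin N) :
    daft N c₁ c₂ m n =
      ee (-((c₂ : ℂ) * ((m : ℕ) : ℂ) ^ 2 + ((m : ℕ) : ℂ) * ((n : ℕ) : ℂ) / N +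
        (c₁ : ℂ) * ((n : ℕ) : ℂ) ^ 2)) / (Real.sqrt N : ℂ) := by
  have key : ∀ a b c : ℂ, Complex.exp a * (Complex.exp b / (Real.sqrt N : ℂ)) * Complex.exp c
      = Complex.exp (a + b + c) / (Real.sqrt N : ℂ) := by
    intro a b c; rw [Complex.exp_add, Complex.exp_add]; ring
  simp only [daft, chirpMatrix, dftMatrix, Matrix.mul_diagonal, Matrix.diagonal_mul,
    Matrix.of_apply]
  rw [key, ee]
  congr 1
  ring

lemma conj_daft_apply (N : ℕ) (hN : 0 < N) (c₁ c₂ : ℝ) (m n : Fin N) :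
    (starRingEnd ℂ) (daft N c₁ c₂ m n) =
      ee ((c₂ : ℂ) * ((m : ℕ) : ℂ) ^ 2 + ((m : ℕ) : ℂ) * ((n : ℕ) : ℂ) / N +
        (c₁ : ℂ) * ((n : ℕ) : ℂ) ^ 2) / (Real.sqrt N : ℂ) := by
  rw [daft_apply' N hN, map_div₀, ee, ee, ← Complex.exp_conj]
  congr 1
  · congr 1
    simp only [_root_.map_mul, map_neg, map_add, map_div₀, map_pow, map_ofNat,
      Complex.conj_ofReal, Complex.conj_I, Complex.conj_natCast]
    ring
  · simp [Complex.conj_ofReal]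


/-- entrywise description of the DAFT-domain subchannel matrix.
`H(k,l)[m,m'] = e^{(2πi/N)(N c₁ l² − m' l + N c₂ (m'² − m²))}` if
`m' ≡ m + c l − k (mod N)` (where `c = 2 N c₁` is an integer), and `0` otherwise. -/
theorem subChannel_entries (N : ℕ) (hN : 0 < N) (hEven : Even N)
    (c₁ c₂ : ℝ) (c : ℤ) (hc : 2 * (N : ℝ) * c₁ = (c : ℝ)) (k l : ℤ) (m m' : Fin N) :
    subChannel N c₁ c₂ k l m m' =
      if ((m' : ℕ) : ZMod N) = ((m : ℕ) : ZMod N) + ((c * l - k : ℤ) : ZMod N) then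
        Complex.exp ((2 * Real.pi * Complex.I / (N : ℂ)) *
          ((N : ℂ) * (c₁ : ℂ) * (l : ℂ) ^ 2 - ((m' : ℕ) : ℂ) * (l : ℂ) +
            (N : ℂ) * (c₂ : ℂ) * (((m' : ℕ) : ℂ) ^ 2 - ((m : ℕ) : ℂ) ^ 2)))
      else 0 := by
  haveI : NeZero N := ⟨hN.ne'⟩
  have hNC : (N : ℂ) ≠ 0 := Nat.cast_ne_zero.2 hN.ne'
  obtain ⟨M, hM⟩ := hEven
  have hNM : (N : ℂ) = 2 * (M : ℂ) := by rw [hM]; push_cast; ring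
  have hcC : 2 * (N : ℂ) * (c₁ : ℂ) = (c : ℂ) := by exact_mod_cast congrArg Complex.ofReal hc
  have hM0 : (M : ℂ) ≠ 0 := by
    have : 0 < M := by omega
    exact_mod_cast Nat.cast_ne_zero.2 this.ne'
  have hc₁ : (c₁ : ℂ) = (c : ℂ) / (2 * N) := by
    rw [eq_div_iff (by simp [hNC] : (2 * (N:ℂ)) ≠ 0)]
    linear_combination hcC
  set d : ℤ := (m' : ℕ) + k - (m : ℕ) - c * l with hd
  set ψ : ℂ := (c₂ : ℂ) * (((m' : ℕ) : ℂ) ^ 2 - ((m : ℕ) : ℂ) ^ 2) - (c₁ : ℂ) * (l : ℂ) ^ 2 +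
      ((k : ℂ) - ((m : ℕ) : ℂ)) * (l : ℂ) / N with hψ
  -- the index function
  set nn : Fin N → Fin N := fun q => ⟨(((q : ℕ) : ZMod N) + (l : ZMod N)).val,
      ZMod.val_lt _⟩ with hnn
  -- step 1: expand the first three factors
  have e1 : ∀ q : Fin N, (daft N c₁ c₂ * dopplerShift N k * cyclicShift N l) m q =
      daft N c₁ c₂ m (nn q) *
        Complex.exp (2 * Real.pi * Complex.I * (k : ℂ) * (((nn q : Fin N) : ℕ) : ℂ) / N) := by
    intro q
    rw [Matrix.mul_apply]
    have h2 : ∀ n : Fin N,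
        (daft N c₁ c₂ * dopplerShift N k) m n * cyclicShift N l n q =
        (if ((n : ℕ) : ZMod N) = ((q : ℕ) : ZMod N) + (l : ZMod N) then
          daft N c₁ c₂ m n *
            Complex.exp (2 * Real.pi * Complex.I * (k : ℂ) * ((n : ℕ) : ℂ) / N) else 0) := by
      intro n
      simp only [dopplerShift, Matrix.mul_diagonal, cyclicShift, Matrix.of_apply,
        mul_ite, mul_one, mul_zero]
    rw [Finset.sum_congr rfl fun n _ => h2 n]
    exact sum_ind N _ _
  -- step 2: termwise formula
  have e2 : ∀ q : Fin N,
      (daft N c₁ c₂ * dopplerShift N k * cyclicShift N l) m q *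
        (starRingEnd ℂ) (daft N c₁ c₂ m' q) =
      ee ψ * ee ((q : ℕ) * (d : ℂ) / N) / N := by
    intro q
    rw [e1 q, daft_apply' N hN, conj_daft_apply N hN]
    -- get the integer j with nn q = q + l + N j
    have hz : (((nn q : Fin N) : ℕ) : ZMod N) = ((q : ℕ) : ZMod N) + (l : ZMod N) := by
      rw [hnn]; exact ZMod.natCast_rightInverse _
    have hdvd : (N : ℤ) ∣ (((nn q : Fin N) : ℕ) : ℤ) - ((q : ℕ) + l) := by
      rw [← ZMod.intCast_zmod_eq_zero_iff_dvd]
      push_cast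
      rw [hz]
      push_cast
      ring
    obtain ⟨j, hj⟩ := hdvd
    have hjC : ((((nn q : Fin N) : ℕ) : ℤ) : ℂ) = ((q : ℕ) : ℂ) + (l : ℂ) + (N : ℂ) * (j : ℂ) := by
      have : (((nn q : Fin N) : ℕ) : ℤ) = ((q : ℕ) : ℤ) + l + N * j := by omega
      rw [this]; push_cast; ring
    have hjC' : ((((nn q : Fin N) : ℕ)) : ℂ) = ((q : ℕ) : ℂ) + (l : ℂ) + (N : ℂ) * (j : ℂ) := by
      exact_mod_cast hjC
    -- the product of exponentials
    have hsq : (Real.sqrt N : ℂ) * (Real.sqrt N : ℂ) = (N : ℂ) := by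
      rw [← Complex.ofReal_mul, Real.mul_self_sqrt (Nat.cast_nonneg N)]
      norm_cast
    have key : ∀ a b x : ℂ, (ee a / (Real.sqrt N : ℂ)) * Complex.exp x * (ee b / (Real.sqrt N : ℂ))
        = ee a * Complex.exp x * ee b / N := by
      intro a b x
      rw [← hsq]; ring
    rw [key]
    have hexp : Complex.exp (2 * Real.pi * Complex.I * (k : ℂ) * (((nn q : Fin N) : ℕ) : ℂ) / N)
        = ee ((k : ℂ) * (((nn q : Fin N) : ℕ) : ℂ) / N) := by
      rw [ee]; congr 1; ring
    rw [hexp, ← ee_add, ← ee_add]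
    congr 1
    -- reduce to exponent identity
    have goal1 : -((c₂ : ℂ) * ((m : ℕ) : ℂ) ^ 2 + ((m : ℕ) : ℂ) * (((nn q : Fin N) : ℕ) : ℂ) / N + (c₁ : ℂ) * (((nn q : Fin N) : ℕ) : ℂ) ^ 2) +
        (k : ℂ) * (((nn q : Fin N) : ℕ) : ℂ) / N +
        ((c₂ : ℂ) * ((m' : ℕ) : ℂ) ^ 2 + ((m' : ℕ) : ℂ) * ((q : ℕ) : ℂ) / N +
          (c₁ : ℂ) * ((q : ℕ) : ℂ) ^ 2) =
        (ψ + (q : ℕ) * (d : ℂ) / N) +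
          ((j * (k - (m : ℕ)) - c * j * ((q : ℕ) + l) - c * j ^ 2 * M : ℤ) : ℂ) := by
      rw [hjC', hψ, hd, hc₁]
      push_cast
      rw [hNM]
      have hMv : (M : ℂ) * ((M : ℂ))⁻¹ = 1 := mul_inv_cancel₀ hM0
      linear_combination ((j : ℂ) * ((k : ℂ) - ((m : ℕ) : ℂ)) -
        (c : ℂ) * (j : ℂ) * (((q : ℕ) : ℂ) + (l : ℂ)) -
        (c : ℂ) * (j : ℂ) ^ 2 * (M : ℂ)) * hMv
    rw [← ee_add]
    exact ee_eq _ _ _ goal1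
  -- step 3: assemble
  have e3 : subChannel N c₁ c₂ k l m m' =
      ee ψ * (if (d : ZMod N) = 0 then (N : ℂ) else 0) / N := by
    rw [subChannel, Matrix.mul_apply]
    simp only [Matrix.conjTranspose_apply, RCLike.star_def]
    rw [Finset.sum_congr rfl fun q _ => e2 q]
    rw [← Finset.sum_div, ← Finset.mul_sum, sum_ee N hN d]
  rw [e3]
  -- step 4: the congruence condition
  have hiff : ((d : ZMod N) = 0) ↔
      (((m' : ℕ) : ZMod N) = ((m : ℕ) : ZMod N) + ((c * l - k : ℤ) : ZMod N)) := by
    rw [hd]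
    constructor
    · intro h; push_cast at h ⊢; linear_combination h
    · intro h; push_cast at h ⊢; linear_combination h
  simp only [hiff]
  split_ifs with h1
  · have h0 : (d : ZMod N) = 0 := hiff.2 h1
    obtain ⟨e₀, he⟩ := (ZMod.intCast_zmod_eq_zero_iff_dvd d N).1 h0
    rw [mul_div_assoc, div_self hNC, mul_one]
    have hdC2 : ((m' : ℕ) : ℂ) + (k : ℂ) - ((m : ℕ) : ℂ) - (c : ℂ) * (l : ℂ)
        = (N : ℂ) * (e₀ : ℂ) := by
      have : ((d : ℤ) : ℂ) = (((N : ℤ) * e₀ : ℤ) : ℂ) := by exact_mod_cast congrArg Int.cast he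
      push_cast [hd] at this
      linear_combination this
    have hkey : ψ = (((N : ℂ) * (c₁ : ℂ) * (l : ℂ) ^ 2 - ((m' : ℕ) : ℂ) * (l : ℂ) +
            (N : ℂ) * (c₂ : ℂ) * (((m' : ℕ) : ℂ) ^ 2 - ((m : ℕ) : ℂ) ^ 2)) / (N : ℂ)) +
          ((e₀ * l : ℤ) : ℂ) := by
      rw [hψ]
      push_cast
      field_simp
      linear_combination ((l : ℂ)) * hdC2 - ((l : ℂ) ^ 2) * hcC
    rw [ee_eq _ _ _ hkey, ee]
    congr 1
    ring
  · simp
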